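/- In the exponential lower-bound instance with parameter n, let j be an index with 3 ≤ j ≤ n, and let σ be any schedule in which job ℓ is on machine 1, job a_j is on machine 1, jobs b_j and c_j are on machine 2, and for every i with 1 ≤ i ≤ j−1, jobs b_i and c_i are on machine 1 and job a_i is on machine 2 (jobs with index greater than j assigned arbitrarily). Let σ' be the schedule that agrees with σ except that a_j is on machine 2, b_j and c_j are on machine 1, and for every i ≤ j−1, a_i is on machine 1 and b_i, c_i are on machine 2. Then there exists a sequence of schedules σ = τ₀, τ₁, …, τ_j = σ' such that for each s < j, τ_{s+1} differs from τ_s on exactly 3 jobs and Cmax τ_{s+1} < Cmax τ_s. -/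

import Mathlib

/-- The jobs of the exponential lower-bound instance with parameter `n`:
jobs `a i`, `b i`, `c i` for each `i : Fin n` (`i` standing for the 1-based index
`i + 1`), together with the large job `l`. -/
inductive LBJob (n : ℕ) where
  | a (i : Fin n)
  | b (i : Fin n)
  | c (i : Fin n)
  | l
  deriving DecidableEq, Fintype

/-- Processing times of the lower-bound instance: with 1-based index `i' = i + 1`,
`p (a i') = 2^(n+i'+1) + 2^(i'-1)`, `p (b i') = 2^(n+i')`,
`p (c i') = 2^(n+i'-1) + 2^(i'-1)`, and `p l = 2^(2n+4)`. -/
def lbp (n : ℕ) : LBJob n → ℕ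
  | .a i => 2 ^ (n + i.1 + 2) + 2 ^ i.1
  | .b i => 2 ^ (n + i.1 + 1)
  | .c i => 2 ^ (n + i.1) + 2 ^ i.1
  | .l => 2 ^ (2 * n + 4)

/-- Load of a machine (`false` = machine 1, `true` = machine 2). -/
def lbLoad (n : ℕ) (m : Bool) (σ : LBJob n → Bool) : ℕ :=
  ∑ j ∈ Finset.univ.filter (fun j => σ j = m), lbp n j

/-- Makespan of a schedule of the lower-bound instance. -/
def lbCmax (n : ℕ) (σ : LBJob n → Bool) : ℕ :=
  max (lbLoad n false σ) (lbLoad n true σ)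

/-! ### Auxiliary machinery -/

/-- An explicit equivalence used to compute sums over `LBJob n`. -/
def lbEquiv (n : ℕ) : (Fin n ⊕ Fin n ⊕ Fin n ⊕ Unit) ≃ LBJob n where
  toFun := fun x => match x with
    | .inl i => .a i
    | .inr (.inl i) => .b i
    | .inr (.inr (.inl i)) => .c i
    | .inr (.inr (.inr _)) => .l
  invFun := fun j => match j with
    | .a i => .inl i
    | .b i => .inr (.inl i)
    | .c i => .inr (.inr (.inl i))
    | .l => .inr (.inr (.inr ()))
  left_inv := by rintro (i | i | i | u) <;> rfl
  right_inv := by rintro (i | i | i) <;> rfl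

lemma lb_sum_two_pow_lt (k : ℕ) : ∑ i ∈ Finset.range k, (2:ℕ)^i < 2^k := by
  induction k with
  | zero => simp
  | succ k ih =>
    rw [Finset.sum_range_succ, pow_succ]
    omega

/-- All jobs other than `l` together are smaller than `l`. -/
lemma lb_total_small (n : ℕ) :
    ∑ j ∈ Finset.univ.erase LBJob.l, lbp n j < 2 ^ (2*n+4) := by
  have h1 : ∑ j ∈ Finset.univ.erase LBJob.l, lbp n j + lbp n LBJob.l
      = ∑ j : LBJob n, lbp n j := Finset.sum_erase_add _ _ (Finset.mem_univ _)
  have h2 : ∑ j : LBJob n, lbp n j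
      = (∑ i : Fin n, lbp n (.a i)) + ((∑ i : Fin n, lbp n (.b i))
        + ((∑ i : Fin n, lbp n (.c i)) + lbp n .l)) := by
    rw [← Fintype.sum_equiv (lbEquiv n) (fun x => lbp n (lbEquiv n x)) (lbp n) (fun _ => rfl)]
    simp [Fintype.sum_sum_type, lbEquiv]
  have h3 : (∑ i : Fin n, lbp n (.a i)) + (∑ i : Fin n, lbp n (.b i))
        + (∑ i : Fin n, lbp n (.c i))
      = (7 * 2^n + 2) * ∑ i ∈ Finset.range n, (2:ℕ)^i := by
    simp only [lbp]
    rw [Fin.sum_univ_eq_sum_range (fun k => (2:ℕ)^(n+k+2)+2^k),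
      Fin.sum_univ_eq_sum_range (fun k => (2:ℕ)^(n+k+1)),
      Fin.sum_univ_eq_sum_range (fun k => (2:ℕ)^(n+k)+2^k),
      ← Finset.sum_add_distrib, ← Finset.sum_add_distrib, Finset.mul_sum]
    apply Finset.sum_congr rfl
    intro i _
    have e1 : (2:ℕ)^(n+i+2) = 2^n * 2^i * 4 := by rw [pow_add, pow_add]; norm_num
    have e2 : (2:ℕ)^(n+i+1) = 2^n * 2^i * 2 := by rw [pow_add, pow_add]; norm_num
    have e3 : (2:ℕ)^(n+i) = 2^n * 2^i := by rw [pow_add]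
    rw [e1, e2, e3]; ring
  have hG : ∑ i ∈ Finset.range n, (2:ℕ)^i < 2^n := lb_sum_two_pow_lt n
  have h4 : (7 * 2^n + 2) * (∑ i ∈ Finset.range n, (2:ℕ)^i) < (7 * 2^n + 2) * 2^n :=
    mul_lt_mul_of_pos_left hG (by positivity)
  have h5 : (7 * 2^n + 2) * 2^n + 2^(2*n+4) ≤ 2^(2*n+4) + 2^(2*n+4) := by
    have e : (2:ℕ)^(2*n+4) = 16 * (2^n * 2^n) := by
      rw [show 2*n+4 = n + (n+4) by ring, pow_add, pow_add]; ring
    have hp : (1:ℕ) ≤ 2^n := Nat.one_le_two_pow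
    nlinarith
  have hl : lbp n LBJob.l = 2^(2*n+4) := rfl
  omega

/-- If `l` is on machine 1, the makespan equals the load of machine 1. -/
lemma lbCmax_eq_load1 (n : ℕ) (σ : LBJob n → Bool) (hl : σ .l = false) :
    lbCmax n σ = lbLoad n false σ := by
  have hfalse : 2^(2*n+4) ≤ lbLoad n false σ := by
    have hmem : LBJob.l ∈ Finset.univ.filter (fun j => σ j = false) := by
      simp [hl]
    have := Finset.single_le_sum (f := lbp n) (fun i _ => Nat.zero_le _) hmem
    exact this
  have htrue : lbLoad n true σ ≤ ∑ j ∈ Finset.univ.erase LBJob.l, lbp n j := by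
    apply Finset.sum_le_sum_of_subset
    intro j hj
    simp only [Finset.mem_filter, Finset.mem_univ, true_and] at hj
    simp only [Finset.mem_erase, Finset.mem_univ, and_true]
    rintro rfl
    rw [hl] at hj
    exact Bool.noConfusion hj
  exact max_eq_left (le_trans htrue (le_trans (le_of_lt (lb_total_small n)) hfalse))

/-- Exchanging the machines of exactly three jobs: bookkeeping identity for the
load of machine 1. -/
lemma lb_load_swap3 (n : ℕ) (σ₁ σ₂ : LBJob n → Bool) (x y z : LBJob n)
    (hxy : x ≠ y) (hxz : x ≠ z) (hyz : y ≠ z)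
    (hagree : ∀ j, j ≠ x → j ≠ y → j ≠ z → σ₁ j = σ₂ j) :
    lbLoad n false σ₂ + ((if σ₁ x = false then lbp n x else 0)
        + (if σ₁ y = false then lbp n y else 0) + (if σ₁ z = false then lbp n z else 0))
    = lbLoad n false σ₁ + ((if σ₂ x = false then lbp n x else 0)
        + (if σ₂ y = false then lbp n y else 0) + (if σ₂ z = false then lbp n z else 0)) := by
  classical
  have hy' : y ∉ ({z} : Finset (LBJob n)) := by simp [hyz]
  have hx' : x ∉ insert y ({z} : Finset (LBJob n)) := by simp [hxy, hxz]
  have key : ∀ σ : LBJob n → Bool, lbLoad n false σ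
      = (∑ j ∈ (Finset.univ \ {x, y, z} : Finset (LBJob n)),
          (if σ j = false then lbp n j else 0))
        + ((if σ x = false then lbp n x else 0)
          + (if σ y = false then lbp n y else 0) + (if σ z = false then lbp n z else 0)) := by
    intro σ
    rw [lbLoad, Finset.sum_filter, ← Finset.sum_sdiff (Finset.subset_univ {x, y, z})]
    congr 1
    rw [Finset.sum_insert hx', Finset.sum_insert hy', Finset.sum_singleton]
    ring
  have hsd : ∑ j ∈ (Finset.univ \ {x, y, z} : Finset (LBJob n)),
      (if σ₁ j = false then lbp n j else 0)
      = ∑ j ∈ (Finset.univ \ {x, y, z} : Finset (LBJob n)),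
      (if σ₂ j = false then lbp n j else 0) := by
    apply Finset.sum_congr rfl
    intro j hj
    simp only [Finset.mem_sdiff, Finset.mem_insert, Finset.mem_singleton] at hj
    rw [hagree j (fun h => hj.2 (Or.inl h)) (fun h => hj.2 (Or.inr (Or.inl h)))
      (fun h => hj.2 (Or.inr (Or.inr h)))]
  rw [key σ₁, key σ₂, hsd]
  ring

/-- A single improving step that moves exactly the three jobs `x, y, z`. -/
lemma lb_step_aux (n : ℕ) (σ₁ σ₂ : LBJob n → Bool)
    (h₁ : σ₁ .l = false) (h₂ : σ₂ .l = false)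
    (x y z : LBJob n) (hxy : x ≠ y) (hxz : x ≠ z) (hyz : y ≠ z)
    (hset : Finset.univ.filter (fun j => σ₁ j ≠ σ₂ j) = {x, y, z})
    (hlt : (if σ₂ x = false then lbp n x else 0) + (if σ₂ y = false then lbp n y else 0)
          + (if σ₂ z = false then lbp n z else 0)
        < (if σ₁ x = false then lbp n x else 0) + (if σ₁ y = false then lbp n y else 0)
          + (if σ₁ z = false then lbp n z else 0)) :
    (Finset.univ.filter (fun j => σ₁ j ≠ σ₂ j)).card = 3 ∧ lbCmax n σ₂ < lbCmax n σ₁ := by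
  constructor
  · rw [hset]
    exact Finset.card_eq_three.mpr ⟨x, y, z, hxy, hxz, hyz, rfl⟩
  · have hagree : ∀ j, j ≠ x → j ≠ y → j ≠ z → σ₁ j = σ₂ j := by
      intro j hjx hjy hjz
      by_contra h
      have hmem : j ∈ Finset.univ.filter (fun j => σ₁ j ≠ σ₂ j) := by
        simp [h]
      rw [hset] at hmem
      simp only [Finset.mem_insert, Finset.mem_singleton] at hmem
      tauto
    have hswap := lb_load_swap3 n σ₁ σ₂ x y z hxy hxz hyz hagree
    rw [lbCmax_eq_load1 n σ₁ h₁, lbCmax_eq_load1 n σ₂ h₂]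
    omega

/-- The time step at which each job is moved. -/
def lbm (n J : ℕ) : LBJob n → ℕ
  | .a i => if i.1 = J ∨ i.1 + 1 = J then 0 else J - i.1
  | .b i => if i.1 = J then 0 else J - i.1
  | .c i => if i.1 = 0 then 1 else J + 1 - i.1
  | .l => 0

/-- Lemma (general step): let `j` be a (1-based) index with `3 ≤ j ≤ n`, encoded by
`jj : Fin n` with `jj + 1 = j`, i.e. `2 ≤ jj`. Suppose in `σ` job `ℓ` is on machine 1,
`a_j` is on machine 1, `b_j, c_j` are on machine 2, and for every `i < j` jobs
`b_i, c_i` are on machine 1 and `a_i` is on machine 2. Let `σ'` agree with `σ` except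
that `a_j` is on machine 2, `b_j, c_j` are on machine 1, and for every `i < j`, `a_i`
is on machine 1 and `b_i, c_i` are on machine 2. Then `σ'` is reachable from `σ` by a
sequence of `j` improving steps, each changing the assignment of exactly 3 jobs. -/
theorem lb_general_step (n : ℕ) (jj : Fin n) (hjj : 2 ≤ jj.1)
    (σ σ' : LBJob n → Bool)
    (hl : σ .l = false)
    (haj : σ (.a jj) = false) (hbj : σ (.b jj) = true) (hcj : σ (.c jj) = true)
    (hlow : ∀ i : Fin n, i.1 < jj.1 →
      σ (.b i) = false ∧ σ (.c i) = false ∧ σ (.a i) = true)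
    (h'l : σ' .l = σ .l)
    (h'aj : σ' (.a jj) = true) (h'bj : σ' (.b jj) = false) (h'cj : σ' (.c jj) = false)
    (h'low : ∀ i : Fin n, i.1 < jj.1 →
      σ' (.a i) = false ∧ σ' (.b i) = true ∧ σ' (.c i) = true)
    (h'high : ∀ i : Fin n, jj.1 < i.1 →
      σ' (.a i) = σ (.a i) ∧ σ' (.b i) = σ (.b i) ∧ σ' (.c i) = σ (.c i)) :
    ∃ τ : ℕ → LBJob n → Bool, τ 0 = σ ∧ τ (jj.1 + 1) = σ' ∧
      ∀ s < jj.1 + 1,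
        (Finset.univ.filter (fun j => τ s j ≠ τ (s + 1) j)).card = 3 ∧
        lbCmax n (τ (s + 1)) < lbCmax n (τ s) := by
  classical
  have hJn : jj.1 < n := jj.2
  refine ⟨fun s j => if lbm n jj.1 j < s then σ' j else σ j, ?_, ?_, ?_⟩
  · funext j; simp
  · funext j
    have hle : lbm n jj.1 j ≤ jj.1 := by
      rcases j with i | i | i | _
      · simp only [lbm]; split_ifs <;> omega
      · simp only [lbm]; split_ifs <;> omega
      · simp only [lbm]; split_ifs <;> omega
      · simp only [lbm]; omega
    simp [Nat.lt_succ_of_le hle]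
  · intro s hs
    set τ : ℕ → LBJob n → Bool := fun s j => if lbm n jj.1 j < s then σ' j else σ j with hτdef
    -- basic facts about σ vs σ'
    have haEq : ∀ i : Fin n, ((σ (.a i) = σ' (.a i)) ↔ jj.1 < i.1) := by
      intro i
      rcases lt_trichotomy i.1 jj.1 with h | h | h
      · rw [(hlow i h).2.2, (h'low i h).1]
        exact iff_of_false (by simp) (by omega)
      · have hi : i = jj := Fin.ext h
        subst hi; rw [haj, h'aj]
        exact iff_of_false (by simp) (by omega)
      · rw [(h'high i h).1]
        exact iff_of_true rfl h
    have hbEq : ∀ i : Fin n, ((σ (.b i) = σ' (.b i)) ↔ jj.1 < i.1) := by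
      intro i
      rcases lt_trichotomy i.1 jj.1 with h | h | h
      · rw [(hlow i h).1, (h'low i h).2.1]
        exact iff_of_false (by simp) (by omega)
      · have hi : i = jj := Fin.ext h
        subst hi; rw [hbj, h'bj]
        exact iff_of_false (by simp) (by omega)
      · rw [(h'high i h).2.1]
        exact iff_of_true rfl h
    have hcEq : ∀ i : Fin n, ((σ (.c i) = σ' (.c i)) ↔ jj.1 < i.1) := by
      intro i
      rcases lt_trichotomy i.1 jj.1 with h | h | h
      · rw [(hlow i h).2.1, (h'low i h).2.2]
        exact iff_of_false (by simp) (by omega)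
      · have hi : i = jj := Fin.ext h
        subst hi; rw [hcj, h'cj]
        exact iff_of_false (by simp) (by omega)
      · rw [(h'high i h).2.2]
        exact iff_of_true rfl h
    have hdiff : ∀ t j, ((τ t j ≠ τ (t + 1) j) ↔ (lbm n jj.1 j = t ∧ ¬ (σ j = σ' j))) := by
      intro t j
      show ((if lbm n jj.1 j < t then σ' j else σ j)
          ≠ if lbm n jj.1 j < t + 1 then σ' j else σ j) ↔ _
      rcases lt_trichotomy (lbm n jj.1 j) t with h | h | h
      · rw [if_pos h, if_pos (by omega)]
        exact iff_of_false (by simp) (by omega)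
      · rw [if_neg (by omega), if_pos (by omega)]
        constructor
        · intro hne; exact ⟨h, hne⟩
        · intro hp; exact hp.2
      · rw [if_neg (by omega), if_neg (by omega)]
        exact iff_of_false (by simp) (by omega)
    have hτval : ∀ t j, lbm n jj.1 j = t → τ t j = σ j ∧ τ (t + 1) j = σ' j := by
      intro t j h
      constructor
      · show (if lbm n jj.1 j < t then σ' j else σ j) = σ j
        rw [if_neg (by omega)]
      · show (if lbm n jj.1 j < t + 1 then σ' j else σ j) = σ' j
        rw [if_pos (by omega)]
    have hτl : ∀ t, τ t LBJob.l = false := by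
      intro t
      show (if lbm n jj.1 LBJob.l < t then σ' LBJob.l else σ LBJob.l) = false
      split
      · rw [h'l, hl]
      · exact hl
    -- case analysis on s
    rcases s with _ | s
    · -- s = 0 : move a_J, b_J, a_{J-1}
      have hz : jj.1 - 1 < n := by omega
      have hset : Finset.univ.filter (fun j => τ 0 j ≠ τ (0 + 1) j)
          = {LBJob.a jj, LBJob.b jj, LBJob.a ⟨jj.1 - 1, hz⟩} := by
        ext j
        simp only [Finset.mem_filter, Finset.mem_univ, true_and, hdiff 0 j,
          Finset.mem_insert, Finset.mem_singleton]
        rcases j with i | i | i | _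
        · simp only [lbm, haEq i, LBJob.a.injEq, LBJob.b.injEq, LBJob.c.injEq,
            Fin.ext_iff, Fin.val_mk, reduceCtorEq, false_or, or_false, iff_false]
          split_ifs <;>
            (try simp only [false_and, false_iff, true_and, and_true, and_false, iff_false,
              iff_true, not_or, not_and, not_not, not_lt, not_le]) <;>
            first
            | trivial
            | omega
        · simp only [lbm, hbEq i, LBJob.a.injEq, LBJob.b.injEq, LBJob.c.injEq,
            Fin.ext_iff, Fin.val_mk, reduceCtorEq, false_or, or_false, iff_false]
          split_ifs <;>
            (try simp only [false_and, false_iff, true_and, and_true, and_false, iff_false,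
              iff_true, not_or, not_and, not_not, not_lt, not_le]) <;>
            first
            | trivial
            | omega
        · simp only [lbm, hcEq i, LBJob.a.injEq, LBJob.b.injEq, LBJob.c.injEq,
            Fin.ext_iff, Fin.val_mk, reduceCtorEq, false_or, or_false, iff_false]
          split_ifs <;>
            (try simp only [false_and, false_iff, true_and, and_true, and_false, iff_false,
              iff_true, not_or, not_and, not_not, not_lt, not_le]) <;>
            first
            | trivial
            | omega
        · simp [lbm, h'l]
      have hzlt : (⟨jj.1 - 1, hz⟩ : Fin n).1 < jj.1 := by
        simp only [Fin.val_mk]; omega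
      have hx := hτval 0 (.a jj) (by simp [lbm])
      have hy := hτval 0 (.b jj) (by simp [lbm])
      have hzv := hτval 0 (.a ⟨jj.1 - 1, hz⟩)
        (by simp only [lbm, Fin.val_mk]; rw [if_pos (Or.inr (by omega))])
      refine lb_step_aux n (τ 0) (τ 1) (hτl 0) (hτl 1)
        (LBJob.a jj) (LBJob.b jj) (LBJob.a ⟨jj.1 - 1, hz⟩)
        (by simp) (by simp only [ne_eq, LBJob.a.injEq, Fin.ext_iff, Fin.val_mk]; omega)
        (by simp) hset ?_
      rw [hx.1, hx.2, hy.1, hy.2, hzv.1, hzv.2, haj, h'aj, hbj, h'bj,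
        (hlow _ hzlt).2.2, (h'low _ hzlt).1]
      simp only [lbp, Fin.val_mk]
      norm_num
      have e1 : n + (jj.1 - 1) + 2 = n + jj.1 + 1 := by omega
      have e2 : (2:ℕ)^(n+jj.1+2) = 2^(n+jj.1+1) + 2^(n+jj.1+1) := by
        rw [pow_succ]; ring
      have e3 : (2:ℕ)^(jj.1-1) < 2^jj.1 := Nat.pow_lt_pow_right one_lt_two (by omega)
      rw [e1]
      omega
    rcases s with _ | s
    · -- s = 1 : move c_J, b_{J-1}, c_0
      have hz1 : jj.1 - 1 < n := by omega
      have hz0 : 0 < n := by omega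
      have hset : Finset.univ.filter (fun j => τ 1 j ≠ τ (1 + 1) j)
          = {LBJob.c jj, LBJob.b ⟨jj.1 - 1, hz1⟩, LBJob.c ⟨0, hz0⟩} := by
        ext j
        simp only [Finset.mem_filter, Finset.mem_univ, true_and, hdiff 1 j,
          Finset.mem_insert, Finset.mem_singleton]
        rcases j with i | i | i | _
        · simp only [lbm, haEq i, LBJob.a.injEq, LBJob.b.injEq, LBJob.c.injEq,
            Fin.ext_iff, Fin.val_mk, reduceCtorEq, false_or, or_false, iff_false]
          split_ifs <;>
            (try simp only [false_and, false_iff, true_and, and_true, and_false, iff_false,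
              iff_true, not_or, not_and, not_not, not_lt, not_le]) <;>
            first
            | trivial
            | omega
        · simp only [lbm, hbEq i, LBJob.a.injEq, LBJob.b.injEq, LBJob.c.injEq,
            Fin.ext_iff, Fin.val_mk, reduceCtorEq, false_or, or_false, iff_false]
          split_ifs <;>
            (try simp only [false_and, false_iff, true_and, and_true, and_false, iff_false,
              iff_true, not_or, not_and, not_not, not_lt, not_le]) <;>
            first
            | trivial
            | omega
        · simp only [lbm, hcEq i, LBJob.a.injEq, LBJob.b.injEq, LBJob.c.injEq,
            Fin.ext_iff, Fin.val_mk, reduceCtorEq, false_or, or_false, iff_false]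
          split_ifs <;>
            (try simp only [false_and, false_iff, true_and, and_true, and_false, iff_false,
              iff_true, not_or, not_and, not_not, not_lt, not_le]) <;>
            first
            | trivial
            | omega
        · simp [lbm, h'l]
      have hylt : (⟨jj.1 - 1, hz1⟩ : Fin n).1 < jj.1 := by
        simp only [Fin.val_mk]; omega
      have hzlt : (⟨0, hz0⟩ : Fin n).1 < jj.1 := by
        simp only [Fin.val_mk]; omega
      have hx := hτval 1 (.c jj) (by simp only [lbm]; rw [if_neg (by omega)]; omega)
      have hy := hτval 1 (.b ⟨jj.1 - 1, hz1⟩)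
        (by simp only [lbm, Fin.val_mk]; rw [if_neg (by omega)]; omega)
      have hzv := hτval 1 (.c ⟨0, hz0⟩)
        (by simp [lbm])
      refine lb_step_aux n (τ 1) (τ 2) (hτl 1) (hτl 2)
        (LBJob.c jj) (LBJob.b ⟨jj.1 - 1, hz1⟩) (LBJob.c ⟨0, hz0⟩)
        (by simp) (by simp only [ne_eq, LBJob.c.injEq, Fin.ext_iff, Fin.val_mk]; omega)
        (by simp) hset ?_
      rw [hx.1, hx.2, hy.1, hy.2, hzv.1, hzv.2, hcj, h'cj,
        (hlow _ hylt).1, (h'low _ hylt).2.1, (hlow _ hzlt).2.1, (h'low _ hzlt).2.2]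
      simp only [lbp, Fin.val_mk]
      norm_num
      have e1 : n + (jj.1 - 1) + 1 = n + jj.1 := by omega
      have e3 : (2:ℕ)^jj.1 < 2^n := Nat.pow_lt_pow_right one_lt_two (by omega)
      rw [e1]
      omega
    · -- steps t = s + 2 with 2 ≤ t ≤ J : move a_{J-t}, b_{J-t}, c_{J+1-t}
      have hts : s + 2 ≤ jj.1 := by omega
      have hxn : jj.1 - (s + 2) < n := by omega
      have hzn : jj.1 + 1 - (s + 2) < n := by omega
      have hset : Finset.univ.filter (fun j => τ (s + 2) j ≠ τ (s + 2 + 1) j)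
          = {LBJob.a ⟨jj.1 - (s + 2), hxn⟩, LBJob.b ⟨jj.1 - (s + 2), hxn⟩,
             LBJob.c ⟨jj.1 + 1 - (s + 2), hzn⟩} := by
        ext j
        simp only [Finset.mem_filter, Finset.mem_univ, true_and, hdiff (s + 2) j,
          Finset.mem_insert, Finset.mem_singleton]
        rcases j with i | i | i | _
        · simp only [lbm, haEq i, LBJob.a.injEq, LBJob.b.injEq, LBJob.c.injEq,
            Fin.ext_iff, Fin.val_mk, reduceCtorEq, false_or, or_false, iff_false]
          split_ifs <;>
            (try simp only [false_and, false_iff, true_and, and_true, and_false, iff_false,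
              iff_true, not_or, not_and, not_not, not_lt, not_le]) <;>
            first
            | trivial
            | omega
        · simp only [lbm, hbEq i, LBJob.a.injEq, LBJob.b.injEq, LBJob.c.injEq,
            Fin.ext_iff, Fin.val_mk, reduceCtorEq, false_or, or_false, iff_false]
          split_ifs <;>
            (try simp only [false_and, false_iff, true_and, and_true, and_false, iff_false,
              iff_true, not_or, not_and, not_not, not_lt, not_le]) <;>
            first
            | trivial
            | omega
        · simp only [lbm, hcEq i, LBJob.a.injEq, LBJob.b.injEq, LBJob.c.injEq,
            Fin.ext_iff, Fin.val_mk, reduceCtorEq, false_or, or_false, iff_false]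
          split_ifs <;>
            (try simp only [false_and, false_iff, true_and, and_true, and_false, iff_false,
              iff_true, not_or, not_and, not_not, not_lt, not_le]) <;>
            first
            | trivial
            | omega
        · simp [lbm, h'l]
      have hxlt : (⟨jj.1 - (s + 2), hxn⟩ : Fin n).1 < jj.1 := by
        simp only [Fin.val_mk]; omega
      have hzlt : (⟨jj.1 + 1 - (s + 2), hzn⟩ : Fin n).1 < jj.1 := by
        simp only [Fin.val_mk]; omega
      have hx := hτval (s + 2) (.a ⟨jj.1 - (s + 2), hxn⟩)
        (by simp only [lbm, Fin.val_mk]; rw [if_neg (by omega)]; omega)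
      have hy := hτval (s + 2) (.b ⟨jj.1 - (s + 2), hxn⟩)
        (by simp only [lbm, Fin.val_mk]; rw [if_neg (by omega)]; omega)
      have hzv := hτval (s + 2) (.c ⟨jj.1 + 1 - (s + 2), hzn⟩)
        (by simp only [lbm, Fin.val_mk]; rw [if_neg (by omega)]; omega)
      refine lb_step_aux n (τ (s + 2)) (τ (s + 2 + 1)) (hτl (s + 2)) (hτl (s + 2 + 1))
        (LBJob.a ⟨jj.1 - (s + 2), hxn⟩) (LBJob.b ⟨jj.1 - (s + 2), hxn⟩)
        (LBJob.c ⟨jj.1 + 1 - (s + 2), hzn⟩)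
        (by simp) (by simp) (by simp) hset ?_
      rw [hx.1, hx.2, hy.1, hy.2, hzv.1, hzv.2,
        (hlow _ hxlt).2.2, (h'low _ hxlt).1, (hlow _ hxlt).1, (h'low _ hxlt).2.1,
        (hlow _ hzlt).2.1, (h'low _ hzlt).2.2]
      simp only [lbp, Fin.val_mk]
      norm_num
      obtain ⟨k, hk1, hk2⟩ : ∃ k, jj.1 - (s + 2) = k ∧ jj.1 + 1 - (s + 2) = k + 1 :=
        ⟨jj.1 - (s + 2), rfl, by omega⟩
      rw [hk1, hk2]
      have e2 : (2:ℕ)^(n + k + 2) = 2^(n + k + 1) + 2^(n + k + 1) := by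
        rw [pow_succ]; ring
      have e6 : (2:ℕ)^(n + (k + 1)) = 2^(n + k + 1) := by rw [Nat.add_assoc]
      have e3 : (2:ℕ)^(k + 1) = 2^k + 2^k := by rw [pow_succ]; ring
      have hp : 0 < (2:ℕ)^k := Nat.pow_pos (by norm_num)
      omega
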